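/- The geometric mechanism is ε-differentially private. Fix ε > 0 and n ≥ 1, and let Geom(ε) be the symmetric geometric distribution on ℤ. Then the randomized function f(b) = Σ_{i=1}^n b_i + X, where X ← Geom(ε) and b ∈ {0,1}^n, is ε-differentially private: for all b, b' ∈ {0,1}^n differing in exactly one coordinate and every subset S ⊆ ℤ, Pr[f(b) ∈ S] ≤ e^ε · Pr[f(b') ∈ S]. -/

import Mathlib

open MeasureTheory
open scoped ENNReal

noncomputable section

attribute [local instance] Classical.propDecidable

/-- Expectation of a real-valued function under a `PMF`. -/
def PMF.expect {α : Type*} [MeasurableSpace α] (p : PMF α) (f : α → ℝ) : ℝ :=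
  ∫ x, f x ∂p.toMeasure

/-- Total variation (statistical) distance between two distributions:
`Δ(p,q) = sup_S |p(S) - q(S)|`. -/
def tvDist {α : Type*} (p q : PMF α) : ℝ :=
  ⨆ S : Set α, |(p.toOuterMeasure S).toReal - (q.toOuterMeasure S).toReal|

/-- A mechanism on `n` players: a randomized function producing an integer output
(an estimate of the sum of the data bits) together with payments to the `n` players. -/
structure Mech (n : ℕ) where
  run : (Fin n → Bool) → (Fin n → ℝ) → PMF (ℤ × (Fin n → ℝ))

namespace Mech

variable {n : ℕ}

/-- The output part `M_out`. -/
def out (M : Mech n) (b : Fin n → Bool) (v : Fin n → ℝ) : PMF ℤ :=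
  (M.run b v).map Prod.fst

/-- The payment part `M_pay`. -/
def payPMF (M : Mech n) (b : Fin n → Bool) (v : Fin n → ℝ) : PMF (Fin n → ℝ) :=
  (M.run b v).map Prod.snd

/-- `Pay_i(b,v)`: the expected payment to player `i`. -/
def pay (M : Mech n) (b : Fin n → Bool) (v : Fin n → ℝ) (i : Fin n) : ℝ :=
  (M.payPMF b v).expect (fun p => p i)

/-- `M_{-i}`: the output together with the payments to all players other than `i`. -/
def minus (M : Mech n) (i : Fin n) (b : Fin n → Bool) (v : Fin n → ℝ) :
    PMF (ℤ × ({j : Fin n // j ≠ i} → ℝ)) :=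
  (M.run b v).map (fun sp => (sp.1, fun j => sp.2 j.1))

end Mech

/-- The type of privacy loss functions `λ_i(b, v, v'_i, s, p_{-i})` for player `i`. -/
abbrev LossFn (n : ℕ) (i : Fin n) : Type :=
  (Fin n → Bool) → (Fin n → ℝ) → ℝ → ℤ → ({j : Fin n // j ≠ i} → ℝ) → ℝ

/-- `Loss_i(b, v, v'_i)`: the expected privacy loss of player `i` with true types `(b,v)`
and declaration `v'_i`. -/
def lossOf {n : ℕ} (M : Mech n) {i : Fin n} (lam : LossFn n i)
    (b : Fin n → Bool) (v : Fin n → ℝ) (v'i : ℝ) : ℝ :=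
  (M.run b (Function.update v i v'i)).expect
    (fun sp => lam b v v'i sp.1 (fun j => sp.2 j.1))

/-- `i`-neighbors: inputs agreeing in all coordinates `j ≠ i`. -/
def iNeighbor {n : ℕ} (i : Fin n) (x y : (Fin n → Bool) × (Fin n → ℝ)) : Prop :=
  ∀ j, j ≠ i → x.1 j = y.1 j ∧ x.2 j = y.2 j

/-- Neighbors: `i`-neighbors for some `i`. -/
def Neighbor {n : ℕ} (x y : (Fin n → Bool) × (Fin n → ℝ)) : Prop :=
  ∃ i, iNeighbor i x y

/-- Monotonically related player types. -/
def monRelated (t t' : Bool × ℝ) : Prop :=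
  (t.1 = false ∧ t'.1 = true ∧ t.2 ≤ t'.2) ∨ (t.1 = true ∧ t'.1 = false ∧ t'.2 ≤ t.2)

/-- Monotonic `i`-neighbors. -/
def monINeighbor {n : ℕ} (i : Fin n) (x y : (Fin n → Bool) × (Fin n → ℝ)) : Prop :=
  iNeighbor i x y ∧ monRelated (x.1 i, x.2 i) (y.1 i, y.2 i)

/-- `(b,v)` is `δ`-distinguishable for player `i` with respect to `f`. -/
def distinguishable {n : ℕ} {α : Type*} (δ : ℝ)
    (f : (Fin n → Bool) → (Fin n → ℝ) → PMF α) (i : Fin n)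
    (b : Fin n → Bool) (v : Fin n → ℝ) : Prop :=
  ∃ y : (Fin n → Bool) × (Fin n → ℝ), iNeighbor i (b, v) y ∧ δ ≤ tvDist (f b v) (f y.1 y.2)

/-- `(b,v)` is `δ`-monotonically distinguishable for player `i` with respect to `f`. -/
def monDistinguishable {n : ℕ} {α : Type*} (δ : ℝ)
    (f : (Fin n → Bool) → (Fin n → ℝ) → PMF α) (i : Fin n)
    (b : Fin n → Bool) (v : Fin n → ℝ) : Prop :=
  ∃ y : (Fin n → Bool) × (Fin n → ℝ), monINeighbor i (b, v) y ∧ δ ≤ tvDist (f b v) (f y.1 y.2)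

/-- `λ_i` respects indifference. -/
def respectsIndifference {n : ℕ} (M : Mech n) {i : Fin n} (lam : LossFn n i) : Prop :=
  ∀ b v, v i = 0 → ∀ v' v'', lossOf M lam b v v' = lossOf M lam b v v''

/-- `λ_i` is increasing for `δ`-distinguishability. -/
def increasingFor {n : ℕ} (M : Mech n) {i : Fin n} (lam : LossFn n i) (δ : ℝ) : Prop :=
  ∃ T : ℝ → (Fin n → Bool) → ({j : Fin n // j ≠ i} → ℝ) → ℝ,
    ∀ ℓ, 0 < ℓ → ∀ (b : Fin n → Bool) (v : Fin n → ℝ),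
      T ℓ b (fun j => v j.1) ≤ v i →
      distinguishable δ M.out i b v →
      ℓ < lossOf M lam b v (v i)

/-- `λ_i` is increasing for `δ`-monotonic distinguishability. -/
def increasingForMon {n : ℕ} (M : Mech n) {i : Fin n} (lam : LossFn n i) (δ : ℝ) : Prop :=
  ∃ T : ℝ → (Fin n → Bool) → ({j : Fin n // j ≠ i} → ℝ) → ℝ,
    ∀ ℓ, 0 < ℓ → ∀ (b : Fin n → Bool) (v : Fin n → ℝ),
      T ℓ b (fun j => v j.1) ≤ v i →
      monDistinguishable δ M.out i b v →
      ℓ < lossOf M lam b v (v i)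

/-- `M` is individually rational. -/
def indivRational {n : ℕ} (M : Mech n) (lam : ∀ i : Fin n, LossFn n i) : Prop :=
  ∀ b v i, lossOf M (lam i) b v (v i) ≤ M.pay b v i

/-- `M` is truthful for input `(b,v)` and player `i`. -/
def truthfulAt {n : ℕ} (M : Mech n) {i : Fin n} (lam : LossFn n i)
    (b : Fin n → Bool) (v : Fin n → ℝ) : Prop :=
  ∀ v'i : ℝ,
    M.pay b (Function.update v i v'i) i - lossOf M lam b v v'i ≤
      M.pay b v i - lossOf M lam b v (v i)

/-- The average `b̄` of the data bits. -/
def bbar {n : ℕ} (b : Fin n → Bool) : ℝ := (∑ i, if b i then (1 : ℝ) else 0) / n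

/-- `M` is `([a, a'], β)`-accurate on input `(b,v)`. -/
def accurate {n : ℕ} (M : Mech n) (a a' β : ℝ) (b : Fin n → Bool) (v : Fin n → ℝ) : Prop :=
  ((M.out b v).toOuterMeasure
      {s : ℤ | ¬((bbar b - a) * n < (s : ℝ) ∧ (s : ℝ) < (bbar b + a') * n)}).toReal ≤ β

/-- `G` is the symmetric geometric distribution `Geom(ε)` on `ℤ`, with
`Pr[X = k] = (1-e^{-ε})/(1+e^{-ε}) · e^{-ε|k|}`. -/
def isGeom (ε : ℝ) (G : PMF ℤ) : Prop :=
  ∀ k : ℤ, G k =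
    ENNReal.ofReal ((1 - Real.exp (-ε)) / (1 + Real.exp (-ε)) * Real.exp (-ε * |(k : ℝ)|))

/-- The monotonic-valuations mechanism `M_{B,ε}` (Algorithm 1): data bits of players with
`2εv_i > B/n` are treated as 0, the output is the resulting sum plus `Geom(ε)` noise, and
each player with `2εv_i ≤ B/n` is paid `B/n` (others are paid nothing). -/
def monMech (n : ℕ) (B ε : ℝ) (G : PMF ℤ) : Mech n where
  run b v := G.map (fun x =>
    ((∑ i, if b i = true ∧ 2 * ε * v i ≤ B / n then (1 : ℤ) else 0) + x,
      fun i => if 2 * ε * v i ≤ B / n then B / n else 0))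

/-- The modified mechanism `M'` of Theorem 4.3: identical to `M_{B,ε}` except that all
players with data bit 0 are paid `B/n`, even those with large privacy valuations. -/
def monMech' (n : ℕ) (B ε : ℝ) (G : PMF ℤ) : Mech n where
  run b v := G.map (fun x =>
    ((∑ i, if b i = true ∧ 2 * ε * v i ≤ B / n then (1 : ℤ) else 0) + x,
      fun i => if 2 * ε * v i ≤ B / n ∨ b i = false then B / n else 0))

/-- The log-ratio of point probabilities of `M_{-i}` between `(b,v)` and the input where
player `i`'s type is replaced by `(b''_i, v''_i)`. -/
def logRatio {n : ℕ} (M : Mech n) (i : Fin n) (b : Fin n → Bool) (v : Fin n → ℝ)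
    (b''i : Bool) (v''i : ℝ) (s : ℤ) (p : {j : Fin n // j ≠ i} → ℝ) : ℝ :=
  Real.log ((M.minus i b v (s, p)).toReal /
    (M.minus i (Function.update b i b''i) (Function.update v i v''i) (s, p)).toReal)

/-- `λ_i` is bounded by differential privacy for monotonic valuations. -/
def boundedByDPMon {n : ℕ} (M : Mech n) {i : Fin n} (lam : LossFn n i) : Prop :=
  ∀ b v v'i s p,
    |lam b v v'i s p| ≤
      v i * ⨆ t : {t : Bool × ℝ // monRelated (b i, v i) t},
        logRatio M i b v t.1.1 t.1.2 s p

/-- `λ_i` respects identical output distributions. -/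
def respectsIdentical {n : ℕ} (M : Mech n) {i : Fin n} (lam : LossFn n i) : Prop :=
  ∀ b v v'i, M.minus i b v = M.minus i b (Function.update v i v'i) →
    ∀ s p, lam b v v'i s p = lam b v (v i) s p

/-- `λ_i` is growing with statistical distance for monotonic neighbors. -/
def growingMon {n : ℕ} (M : Mech n) {i : Fin n} (lam : LossFn n i) : Prop :=
  ∀ b v y, monINeighbor i (b, v) y →
    v i * tvDist (M.out b v) (M.out y.1 y.2) ≤ lossOf M lam b v (v i)

/-- **The geometric mechanism is `ε`-differentially private.** -/
theorem geom_mechanism_dp (n : ℕ) (hn : 1 ≤ n) (ε : ℝ) (hε : 0 < ε)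
    (G : PMF ℤ) (hG : isGeom ε G)
    (b b' : Fin n → Bool) (i : Fin n)
    (hne : b i ≠ b' i) (hag : ∀ j, j ≠ i → b j = b' j)
    (S : Set ℤ) :
    (G.map (fun x => (∑ j, if b j then (1 : ℤ) else 0) + x)).toOuterMeasure S ≤
      ENNReal.ofReal (Real.exp ε) *
        (G.map (fun x => (∑ j, if b' j then (1 : ℤ) else 0) + x)).toOuterMeasure S := by
  
  classical
  set c := ∑ j, if b j then (1:ℤ) else 0 with hc
  set c' := ∑ j, if b' j then (1:ℤ) else 0 with hc'
  set d := c - c' with hdd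
  have hd : |d| ≤ 1 := by
    have hval : d = (if b i then (1:ℤ) else 0) - (if b' i then 1 else 0) := by
      rw [hdd, hc, hc', ← Finset.sum_sub_distrib]
      refine Finset.sum_eq_single_of_mem i (Finset.mem_univ i) ?_
      intro j _ hj
      rw [hag j hj]; ring
    rw [hval]
    rcases Bool.eq_false_or_eq_true (b i) with h1 | h1 <;>
      rcases Bool.eq_false_or_eq_true (b' i) with h2 | h2 <;>
        simp [h1, h2]
  have hd' : |(d:ℝ)| ≤ 1 := by
    rw [← Int.cast_abs]
    exact_mod_cast hd
  have key : ∀ x : ℤ, G x ≤ ENNReal.ofReal (Real.exp ε) * G (x + d) := by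
    intro x
    rw [hG x, hG (x + d), ← ENNReal.ofReal_mul (Real.exp_pos ε).le]
    apply ENNReal.ofReal_le_ofReal
    have hA : 0 ≤ (1 - Real.exp (-ε)) / (1 + Real.exp (-ε)) := by
      have h1 : Real.exp (-ε) < 1 := Real.exp_lt_one_iff.mpr (by linarith)
      have h2 : 0 < Real.exp (-ε) := Real.exp_pos _
      exact div_nonneg (by linarith) (by linarith)
    have habs : |((x + d : ℤ) : ℝ)| ≤ |(x : ℝ)| + 1 := by
      push_cast
      calc |(x:ℝ) + d| ≤ |(x:ℝ)| + |(d:ℝ)| := abs_add_le _ _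
        _ ≤ |(x:ℝ)| + 1 := by linarith
    have hexp : Real.exp (-ε * |(x:ℝ)|) ≤
        Real.exp ε * Real.exp (-ε * |((x + d : ℤ) : ℝ)|) := by
      rw [← Real.exp_add]
      apply Real.exp_le_exp.mpr
      nlinarith [hε.le, habs, abs_nonneg ((x:ℝ))]
    calc (1 - Real.exp (-ε)) / (1 + Real.exp (-ε)) * Real.exp (-ε * |(x:ℝ)|)
        ≤ (1 - Real.exp (-ε)) / (1 + Real.exp (-ε)) *
          (Real.exp ε * Real.exp (-ε * |((x + d : ℤ) : ℝ)|)) :=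
          mul_le_mul_of_nonneg_left hexp hA
      _ = Real.exp ε * ((1 - Real.exp (-ε)) / (1 + Real.exp (-ε)) *
          Real.exp (-ε * |((x + d : ℤ) : ℝ)|)) := by ring
  rw [PMF.toOuterMeasure_map_apply, PMF.toOuterMeasure_map_apply,
      PMF.toOuterMeasure_apply, PMF.toOuterMeasure_apply]
  have he : ∀ x : ℤ,
      Set.indicator ((fun x => c + x) ⁻¹' S) (⇑G) x ≤
      Set.indicator ((fun x => c' + x) ⁻¹' S)
        (fun y => ENNReal.ofReal (Real.exp ε) * G y) (x + d) := by
    intro x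
    by_cases hx : x ∈ (fun x => c + x) ⁻¹' S
    · rw [Set.indicator_of_mem hx, Set.indicator_of_mem]
      · exact key x
      · show c' + (x + d) ∈ S
        have heq : c' + (x + d) = c + x := by rw [hdd]; ring
        rw [heq]; exact hx
    · rw [Set.indicator_of_notMem hx]
      exact zero_le
  calc ∑' x, Set.indicator ((fun x => c + x) ⁻¹' S) (⇑G) x
      ≤ ∑' x, Set.indicator ((fun x => c' + x) ⁻¹' S)
          (fun y => ENNReal.ofReal (Real.exp ε) * G y) (x + d) :=
        ENNReal.tsum_le_tsum he
    _ = ∑' y, Set.indicator ((fun x => c' + x) ⁻¹' S)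
          (fun y => ENNReal.ofReal (Real.exp ε) * G y) y :=
        (Equiv.addRight d).tsum_eq _
    _ = ENNReal.ofReal (Real.exp ε) *
          ∑' y, Set.indicator ((fun x => c' + x) ⁻¹' S) (⇑G) y := by
        rw [← ENNReal.tsum_mul_left]
        exact tsum_congr fun y => by
          by_cases h : y ∈ (fun x => c' + x) ⁻¹' S <;> simp [h]
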